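/- Assume (C1) and E[‖W_1‖_1] < ∞. Then for every l ∈ [L], Σ_{j=1}^n g_l(W_{1l} W_{jl}/T_l(n)) → c_l W_{1l} in probability as n → ∞. -/

import Mathlib

open MeasureTheory Filter Finset ProbabilityTheory
open scoped ENNReal

noncomputable section

private lemma finset_bound (f : ℕ → ℝ) (N : ℕ) : ∃ C, ∀ j < N, f j ≤ C := by
  induction N with
  | zero => exact ⟨0, fun j hj => absurd hj (Nat.not_lt_zero j)⟩
  | succ N ih =>
    obtain ⟨C, hC⟩ := ih
    refine ⟨max C (f N), fun j hj => ?_⟩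
    rcases Nat.lt_succ_iff_lt_or_eq.mp hj with h | h
    · exact (hC j h).trans (le_max_left _ _)
    · subst h; exact le_max_right _ _

private lemma aux_linear {Ω : Type} [MeasurableSpace Ω] (P : Measure Ω) [IsProbabilityMeasure P]
    (X : ℕ → Ω → ℝ) (hmeas : ∀ i, Measurable (X i))
    (hident : ∀ i, IdentDistrib (X i) (X 0) P P)
    (hnonneg : ∀ i ω, 0 ≤ X i ω) (hint : Integrable (X 0) P) :
    ∀ᵐ ω ∂P, ∀ η : ℝ, 0 < η → ∀ᶠ n : ℕ in atTop, ∀ j < n, X j ω ≤ η * n := by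
  have key : ∀ k : ℕ, ∀ᵐ ω ∂P, ∀ᶠ n : ℕ in atTop, ((k : ℝ) + 1) * X n ω ≤ n := by
    intro k
    set Y : Ω → ℝ := fun ω => ((k : ℝ) + 1) * X 0 ω with hY
    have hYint : Integrable Y P := hint.const_mul _
    have hYnn : 0 ≤ Y := fun ω => mul_nonneg (by positivity) (hnonneg 0 ω)
    have htsum : (∑' n : ℕ, P {ω | Y ω ∈ Set.Ioi (n : ℝ)}) ≠ ∞ := by
      letI : MeasureSpace Ω := ⟨P⟩
      haveI : IsProbabilityMeasure (volume : Measure Ω) := inferInstanceAs (IsProbabilityMeasure P)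
      exact (tsum_prob_mem_Ioi_lt_top hYint hYnn).ne
    have hswap : ∀ n : ℕ, P {ω | ((k : ℝ) + 1) * X n ω ∈ Set.Ioi (n : ℝ)}
        = P {ω | Y ω ∈ Set.Ioi (n : ℝ)} := by
      intro n
      have hid : IdentDistrib (fun ω => ((k : ℝ) + 1) * X n ω) Y P P :=
        (hident n).comp (measurable_const_mul ((k : ℝ) + 1))
      exact hid.measure_mem_eq measurableSet_Ioi
    have htsum2 : (∑' n : ℕ, P {ω | ((k : ℝ) + 1) * X n ω ∈ Set.Ioi (n : ℝ)}) ≠ ∞ := by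
      rw [tsum_congr hswap]; exact htsum
    filter_upwards [ae_finite_setOf_mem htsum2] with ω hω
    have := (Set.finite_coe_iff.mp hω).eventually_cofinite_notMem
    rw [Nat.cofinite_eq_atTop] at this
    filter_upwards [this] with n hn
    simpa [Set.mem_Ioi, not_lt] using hn
  rw [← ae_all_iff] at key
  filter_upwards [key] with ω hω η hη
  obtain ⟨k, hk⟩ := exists_nat_gt (1 / η)
  have hk1 : 1 / η < (k : ℝ) + 1 := hk.trans_le (by linarith)
  have hkpos : (0 : ℝ) < (k : ℝ) + 1 := by positivity
  have hηk : 1 ≤ η * ((k : ℝ) + 1) := by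
    rw [div_lt_iff₀ hη] at hk1; linarith [hk1]
  obtain ⟨N, hN⟩ := (eventually_atTop).mp (hω k)
  obtain ⟨C, hC⟩ := finset_bound (fun j => X j ω) N
  obtain ⟨n₀, hn₀⟩ := exists_nat_ge (C / η)
  rw [eventually_atTop]
  refine ⟨max N n₀, fun n hn j hj => ?_⟩
  have hnN : N ≤ n := le_trans (le_max_left _ _) hn
  have hnn₀ : (n₀ : ℝ) ≤ n := Nat.cast_le.mpr (le_trans (le_max_right _ _) hn)
  by_cases hjN : j < N
  · have h1 : X j ω ≤ C := hC j hjN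
    have h2 : C ≤ η * n₀ := by
      rw [div_le_iff₀ hη] at hn₀; linarith [hn₀]
    calc X j ω ≤ η * n₀ := h1.trans h2
      _ ≤ η * n := by nlinarith
  · push_neg at hjN
    have h1 : ((k : ℝ) + 1) * X j ω ≤ j := hN j hjN
    have hjn : (j : ℝ) ≤ n := Nat.cast_le.mpr hj.le
    have h2 : X j ω ≤ (j : ℝ) / ((k : ℝ) + 1) := by
      rw [le_div_iff₀ hkpos]; linarith [h1]
    calc X j ω ≤ (j : ℝ) / ((k : ℝ) + 1) := h2
      _ ≤ η * j := by
          rw [div_le_iff₀ hkpos]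
          nlinarith [Nat.cast_nonneg (α := ℝ) j]
      _ ≤ η * n := by nlinarith
/-- Lemma `gconv`: Under (C1) and `E[‖W₁‖₁] < ∞`, for every layer `l`,
`Σ_{j=1}^n g_l(W_{1l} W_{jl}/T_l(n)) → c_l W_{1l}` in probability as `n → ∞`. -/
theorem stmt7 {Ω : Type} [MeasurableSpace Ω] (P : Measure Ω) [IsProbabilityMeasure P]
    (L : ℕ) (hL : 1 ≤ L)
    (W : ℕ → Ω → Fin L → ℝ)
    (hWmeas : ∀ i, Measurable (W i))
    (hWindep : iIndepFun W P)
    (hWident : ∀ i, Measure.map (W i) P = Measure.map (W 0) P)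
    (hWnonneg : ∀ i ω l, 0 ≤ W i ω l)
    (hWcont : ∀ x : Fin L → ℝ, P {ω | W 0 ω = x} = 0)
    (hWint : Integrable (fun ω => ∑ l, W 0 ω l) P)
    (g : Fin L → ℝ → ℝ) (c : Fin L → ℝ) (M δ ν : ℝ)
    (hgnonneg : ∀ l x, 0 ≤ x → 0 ≤ g l x)
    (hc : ∀ l, 0 < c l) (hM : 0 < M) (hδ : 0 < δ) (hν : 0 < ν)
    (hC1 : ∀ l, ∀ x : ℝ, 0 ≤ x → x < δ → |g l x - c l * x| ≤ M * x ^ (1 + ν))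
    (l : Fin L) (ε : ℝ) (hε : 0 < ε) :
    Tendsto (fun n : ℕ =>
        (P {ω | ε < |(∑ j ∈ Finset.range n,
              g l (W 0 ω l * W j ω l / (∑ i ∈ Finset.range n, W i ω l)))
            - c l * W 0 ω l|}).toReal)
      atTop (nhds 0) := by
  classical
  -- coordinate process
  have hXmeas : ∀ i, Measurable (fun ω => W i ω l) :=
    fun i => (measurable_pi_apply l).comp (hWmeas i)
  have hXnonneg : ∀ i ω, 0 ≤ W i ω l := fun i ω => hWnonneg i ω l
  have hXident : ∀ i, IdentDistrib (fun ω => W i ω l) (fun ω => W 0 ω l) P P := by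
    intro i
    refine ⟨(hXmeas i).aemeasurable, (hXmeas 0).aemeasurable, ?_⟩
    show Measure.map ((fun v : Fin L → ℝ => v l) ∘ W i) P
        = Measure.map ((fun v : Fin L → ℝ => v l) ∘ W 0) P
    rw [← Measure.map_map (measurable_pi_apply l) (hWmeas i),
      ← Measure.map_map (measurable_pi_apply l) (hWmeas 0), hWident i]
  have hXint : Integrable (fun ω => W 0 ω l) P := by
    refine hWint.mono' (hXmeas 0).aestronglyMeasurable ?_
    filter_upwards with ω
    rw [Real.norm_eq_abs, abs_of_nonneg (hXnonneg 0 ω)]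
    exact Finset.single_le_sum (f := fun k => W 0 ω k) (fun i _ => hWnonneg 0 ω i) (mem_univ l)
  have hXindep : Pairwise (Function.onFun (IndepFun · · P) (fun i ω => W i ω l)) := by
    have h := hWindep.comp (fun _ => fun v : Fin L → ℝ => v l) (fun _ => measurable_pi_apply l)
    exact fun i j hij => h.indepFun hij
  set μ0 : ℝ := ∫ ω, W 0 ω l ∂P with hμ0def
  have hμ0nn : 0 ≤ μ0 := integral_nonneg (fun ω => hXnonneg 0 ω)
  -- the value of g at 0
  have hg0 : g l 0 = 0 := by
    have h := hC1 l 0 le_rfl hδ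
    rw [Real.zero_rpow (by positivity : (1 : ℝ) + ν ≠ 0)] at h
    have := abs_nonneg (g l 0 - c l * 0)
    have : |g l 0 - c l * 0| = 0 := le_antisymm (by simpa using h) this
    rw [abs_eq_zero] at this
    linarith [this]
  rcases eq_or_lt_of_le hμ0nn with hμz | hμpos
  · -- degenerate case: X 0 = 0 a.s.
    have hae : ∀ᵐ ω ∂P, W 0 ω l = 0 := by
      have := (integral_eq_zero_iff_of_nonneg (fun ω => hXnonneg 0 ω) hXint).mp hμz.symm
      filter_upwards [this] with ω hω using hω
    have hzero : ∀ i : ℕ, P {ω | W i ω l ≠ 0} = 0 := by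
      intro i
      have hmeq := (hXident i).measure_mem_eq (s := {x : ℝ | x ≠ 0})
        (measurableSet_singleton (0 : ℝ)).compl
      have h0 : P {ω | W 0 ω l ≠ 0} = 0 := ae_iff.mp hae
      calc P {ω | W i ω l ≠ 0}
          = P ((fun ω => W i ω l) ⁻¹' {x : ℝ | x ≠ 0}) := rfl
        _ = P ((fun ω => W 0 ω l) ⁻¹' {x : ℝ | x ≠ 0}) := hmeq
        _ = 0 := h0
    have hN : P (⋃ i : ℕ, {ω | W i ω l ≠ 0}) = 0 := measure_iUnion_null hzero
    have hsub : ∀ n : ℕ,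
        {ω | ε < |(∑ j ∈ Finset.range n,
            g l (W 0 ω l * W j ω l / (∑ i ∈ Finset.range n, W i ω l)))
          - c l * W 0 ω l|} ⊆ ⋃ i : ℕ, {ω | W i ω l ≠ 0} := by
      intro n ω hω
      by_contra hmem
      simp only [Set.mem_iUnion, Set.mem_setOf_eq, not_exists, not_not] at hmem
      have : ε < |(∑ j ∈ Finset.range n,
          g l (W 0 ω l * W j ω l / (∑ i ∈ Finset.range n, W i ω l))) - c l * W 0 ω l| := hω
      rw [hmem 0] at this
      simp only [zero_mul, zero_div, hg0, Finset.sum_const_zero, mul_zero, sub_zero, abs_zero]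
        at this
      linarith
    refine Tendsto.congr (fun n => ?_) (tendsto_const_nhds (x := (0 : ℝ)))
    have : P {ω | ε < |(∑ j ∈ Finset.range n,
        g l (W 0 ω l * W j ω l / (∑ i ∈ Finset.range n, W i ω l)))
        - c l * W 0 ω l|} = 0 := measure_mono_null (hsub n) hN
    rw [this]; simp
  · -- main case: μ0 > 0
    set B : ℕ → Set Ω := fun n =>
        ({ω | (∑ i ∈ Finset.range n, W i ω l) ≤ 0} ∪
          ⋃ j ∈ Finset.range n,
            {ω | δ ≤ W 0 ω l * W j ω l / (∑ i ∈ Finset.range n, W i ω l)}) ∪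
        {ω | ε < M * ∑ j ∈ Finset.range n,
            (W 0 ω l * W j ω l / (∑ i ∈ Finset.range n, W i ω l)) ^ (1 + ν)} with hBdef
    have hTmeas : ∀ n, Measurable (fun ω => ∑ i ∈ Finset.range n, W i ω l) :=
      fun n => Finset.measurable_sum _ (fun i _ => hXmeas i)
    have hxmeas : ∀ n j, Measurable
        (fun ω => W 0 ω l * W j ω l / (∑ i ∈ Finset.range n, W i ω l)) :=
      fun n j => ((hXmeas 0).mul (hXmeas j)).div (hTmeas n)
    have hBmeas : ∀ n, MeasurableSet (B n) := by
      intro n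
      refine MeasurableSet.union (MeasurableSet.union ?_ ?_) ?_
      · exact measurableSet_le (hTmeas n) measurable_const
      · exact MeasurableSet.biUnion (Finset.range n).countable_toSet
          (fun j _ => measurableSet_le measurable_const (hxmeas n j))
      · refine measurableSet_lt measurable_const (measurable_const.mul ?_)
        exact Finset.measurable_sum _ (fun j _ =>
          (Real.continuous_rpow_const (by linarith : (0:ℝ) ≤ 1 + ν)).measurable.comp (hxmeas n j))
    -- the bad event contains the target event
    have hsub : ∀ n : ℕ,
        {ω | ε < |(∑ j ∈ Finset.range n,
            g l (W 0 ω l * W j ω l / (∑ i ∈ Finset.range n, W i ω l)))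
          - c l * W 0 ω l|} ⊆ B n := by
      intro n ω hω
      by_contra hmem
      rw [hBdef] at hmem
      simp only [Set.mem_union, Set.mem_setOf_eq, Set.mem_iUnion, not_or, not_exists,
        not_le, not_lt, exists_prop] at hmem
      obtain ⟨⟨hT, hxδ⟩, hsML⟩ := hmem
      have hTnn : 0 ≤ ∑ i ∈ Finset.range n, W i ω l :=
        Finset.sum_nonneg (fun i _ => hXnonneg i ω)
      have hxnn : ∀ j, 0 ≤ W 0 ω l * W j ω l / (∑ i ∈ Finset.range n, W i ω l) :=
        fun j => div_nonneg (mul_nonneg (hXnonneg 0 ω) (hXnonneg j ω)) hTnn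
      have hTne : (∑ i ∈ Finset.range n, W i ω l) ≠ 0 := ne_of_gt hT
      have hsum : ∑ j ∈ Finset.range n,
          W 0 ω l * W j ω l / (∑ i ∈ Finset.range n, W i ω l) = W 0 ω l := by
        rw [← Finset.sum_div, ← Finset.mul_sum, mul_div_assoc, div_self hTne, mul_one]
      have hbound : |(∑ j ∈ Finset.range n,
          g l (W 0 ω l * W j ω l / (∑ i ∈ Finset.range n, W i ω l))) - c l * W 0 ω l| ≤ ε := by
        have step1 : (∑ j ∈ Finset.range n,
            g l (W 0 ω l * W j ω l / (∑ i ∈ Finset.range n, W i ω l))) - c l * W 0 ω l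
            = ∑ j ∈ Finset.range n,
              (g l (W 0 ω l * W j ω l / (∑ i ∈ Finset.range n, W i ω l))
                - c l * (W 0 ω l * W j ω l / (∑ i ∈ Finset.range n, W i ω l))) := by
          rw [Finset.sum_sub_distrib, ← Finset.mul_sum, hsum]
        rw [step1]
        calc |∑ j ∈ Finset.range n,
              (g l (W 0 ω l * W j ω l / (∑ i ∈ Finset.range n, W i ω l))
                - c l * (W 0 ω l * W j ω l / (∑ i ∈ Finset.range n, W i ω l)))|
            ≤ ∑ j ∈ Finset.range n,
              |g l (W 0 ω l * W j ω l / (∑ i ∈ Finset.range n, W i ω l))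
                - c l * (W 0 ω l * W j ω l / (∑ i ∈ Finset.range n, W i ω l))| :=
              Finset.abs_sum_le_sum_abs _ _
          _ ≤ ∑ j ∈ Finset.range n,
              M * (W 0 ω l * W j ω l / (∑ i ∈ Finset.range n, W i ω l)) ^ (1 + ν) :=
              Finset.sum_le_sum (fun j hj => hC1 l _ (hxnn j) (lt_of_not_ge (fun hge => hxδ j ⟨hj, hge⟩)))
          _ = M * ∑ j ∈ Finset.range n,
              (W 0 ω l * W j ω l / (∑ i ∈ Finset.range n, W i ω l)) ^ (1 + ν) :=
              (Finset.mul_sum _ _ _).symm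
          _ ≤ ε := hsML
      exact absurd hω (not_lt.mpr hbound)
    -- a.e. eventually not in B n
    have hslln : ∀ᵐ ω ∂P, Tendsto
        (fun n : ℕ => (∑ i ∈ Finset.range n, W i ω l) / n) atTop (nhds μ0) :=
      strong_law_ae_real (fun i ω => W i ω l) hXint hXindep hXident
    have hlin := aux_linear P (fun i ω => W i ω l) hXmeas hXident hXnonneg hXint
    have hae : ∀ᵐ ω ∂P, ∀ᶠ n : ℕ in atTop, ω ∉ B n := by
      filter_upwards [hslln, hlin] with ω hT hL2
      set D : ℝ := W 0 ω l with hDdef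
      have hD : 0 ≤ D := hXnonneg 0 ω
      set κ : ℝ := min (δ / 2) ((ε / (M * (D + 1))) ^ ν⁻¹) with hκdef
      have hκpos : 0 < κ :=
        lt_min (by linarith) (Real.rpow_pos_of_pos (by positivity) _)
      have hκδ : κ < δ := (min_le_left _ _).trans_lt (by linarith)
      have hκν : M * κ ^ ν * D ≤ ε := by
        have h1 : κ ^ ν ≤ ε / (M * (D + 1)) := by
          calc κ ^ ν ≤ ((ε / (M * (D + 1))) ^ ν⁻¹) ^ ν :=
                Real.rpow_le_rpow hκpos.le (min_le_right _ _) hν.le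
            _ = ε / (M * (D + 1)) := Real.rpow_inv_rpow (by positivity) hν.ne'
        have h2 : M * κ ^ ν * D ≤ M * (ε / (M * (D + 1))) * D :=
          mul_le_mul_of_nonneg_right (mul_le_mul_of_nonneg_left h1 hM.le) hD
        have h3 : M * (ε / (M * (D + 1))) * D = ε * (D / (D + 1)) := by
          field_simp
        have h4 : ε * (D / (D + 1)) ≤ ε := by
          have hD1 : 0 < D + 1 := by linarith
          have : D / (D + 1) ≤ 1 := by rw [div_le_one hD1]; linarith
          nlinarith
        linarith
      set η : ℝ := κ * μ0 / (2 * (D + 1)) with hηdef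
      have hη : 0 < η := by positivity
      have hE1 : ∀ᶠ n : ℕ in atTop, μ0 / 2 * n < ∑ i ∈ Finset.range n, W i ω l := by
        have h1 := hT.eventually (eventually_gt_nhds (show μ0 / 2 < μ0 by linarith))
        filter_upwards [h1, eventually_ge_atTop 1] with n hn hn1
        have hnpos : (0 : ℝ) < n := by exact_mod_cast hn1
        rw [lt_div_iff₀ hnpos] at hn
        exact hn
      filter_upwards [hE1, hL2 η hη, eventually_ge_atTop 1] with n hn1 hn2 hn3
      intro hmem
      have hnpos : (0 : ℝ) < n := by exact_mod_cast hn3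
      have hTpos : 0 < ∑ i ∈ Finset.range n, W i ω l :=
        lt_of_le_of_lt (by positivity) hn1
      have hTne : (∑ i ∈ Finset.range n, W i ω l) ≠ 0 := ne_of_gt hTpos
      have hxnn : ∀ j, 0 ≤ W 0 ω l * W j ω l / (∑ i ∈ Finset.range n, W i ω l) :=
        fun j => div_nonneg (mul_nonneg (hXnonneg 0 ω) (hXnonneg j ω)) hTpos.le
      have hxle : ∀ j < n, W 0 ω l * W j ω l / (∑ i ∈ Finset.range n, W i ω l) ≤ κ := by
        intro j hj
        have hXj : W j ω l ≤ η * n := hn2 j hj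
        have hnum : W 0 ω l * W j ω l ≤ D * (η * n) :=
          mul_le_mul_of_nonneg_left hXj hD
        have hden : 0 < μ0 / 2 * n := by positivity
        calc W 0 ω l * W j ω l / (∑ i ∈ Finset.range n, W i ω l)
            ≤ D * (η * n) / (μ0 / 2 * n) :=
              div_le_div₀ (by positivity) hnum hden hn1.le
          _ = D * κ / (D + 1) := by
              rw [hηdef]; field_simp
          _ ≤ κ := by
              rw [div_le_iff₀ (by positivity : (0:ℝ) < D + 1)]
              nlinarith [hκpos.le]
      rw [hBdef] at hmem
      rcases hmem with (h | h) | h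
      · exact absurd h (not_le.mpr hTpos)
      · simp only [Set.mem_iUnion, Set.mem_setOf_eq, exists_prop] at h
        obtain ⟨j, hj, hδx⟩ := h
        have := hxle j (Finset.mem_range.mp hj)
        linarith
      · have hsum : ∑ j ∈ Finset.range n,
            W 0 ω l * W j ω l / (∑ i ∈ Finset.range n, W i ω l) = D := by
          rw [← Finset.sum_div, ← Finset.mul_sum, mul_div_assoc, div_self hTne, mul_one]
        have hterm : ∀ j ∈ Finset.range n,
            (W 0 ω l * W j ω l / (∑ i ∈ Finset.range n, W i ω l)) ^ (1 + ν)
            ≤ κ ^ ν * (W 0 ω l * W j ω l / (∑ i ∈ Finset.range n, W i ω l)) := by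
          intro j hj
          rcases eq_or_lt_of_le (hxnn j) with hz | hz
          · rw [← hz, Real.zero_rpow (by positivity : (1:ℝ) + ν ≠ 0), mul_zero]
          · rw [Real.rpow_add hz, Real.rpow_one, mul_comm (κ ^ ν)]
            exact mul_le_mul_of_nonneg_left
              (Real.rpow_le_rpow hz.le (hxle j (Finset.mem_range.mp hj)) hν.le) hz.le
        have hb : M * ∑ j ∈ Finset.range n,
            (W 0 ω l * W j ω l / (∑ i ∈ Finset.range n, W i ω l)) ^ (1 + ν)
            ≤ M * (κ ^ ν * D) := by
          refine mul_le_mul_of_nonneg_left ?_ hM.le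
          calc (∑ j ∈ Finset.range n,
              (W 0 ω l * W j ω l / (∑ i ∈ Finset.range n, W i ω l)) ^ (1 + ν))
              ≤ ∑ j ∈ Finset.range n,
                κ ^ ν * (W 0 ω l * W j ω l / (∑ i ∈ Finset.range n, W i ω l)) :=
                Finset.sum_le_sum hterm
            _ = κ ^ ν * D := by rw [← Finset.mul_sum, hsum]
        have hlt : ε < M * (κ ^ ν * D) := lt_of_lt_of_le h hb
        have : M * (κ ^ ν * D) = M * κ ^ ν * D := by ring
        linarith [hκν]
    -- conclude via dominated convergence and squeezing
    have hkey : Tendsto (fun n => (P (B n)).toReal) atTop (nhds 0) := by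
      have hrepr : ∀ n, (P (B n)).toReal
          = ∫ ω, Set.indicator (B n) (fun _ => (1 : ℝ)) ω ∂P := by
        intro n
        rw [integral_indicator_const (1 : ℝ) (hBmeas n)]
        simp [measureReal_def]
      have hmeas' : ∀ n, AEStronglyMeasurable
          (fun ω => Set.indicator (B n) (fun _ => (1 : ℝ)) ω) P :=
        fun n => (measurable_const.indicator (hBmeas n)).aestronglyMeasurable
      have hbd : ∀ n, ∀ᵐ ω ∂P,
          ‖Set.indicator (B n) (fun _ => (1 : ℝ)) ω‖ ≤ (1 : ℝ) := by
        intro n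
        filter_upwards with ω
        by_cases hω : ω ∈ B n <;> simp [Set.indicator_apply, hω]
      have hlim : ∀ᵐ ω ∂P, Tendsto
          (fun n => Set.indicator (B n) (fun _ => (1 : ℝ)) ω) atTop (nhds 0) := by
        filter_upwards [hae] with ω hω
        refine Tendsto.congr' ?_ tendsto_const_nhds
        filter_upwards [hω] with n hn
        exact (Set.indicator_of_notMem hn _).symm
      have := tendsto_integral_of_dominated_convergence (fun _ => (1 : ℝ))
        hmeas' (integrable_const 1) hbd hlim
      simp only [integral_zero] at this
      refine Tendsto.congr (fun n => ?_) this
      exact (hrepr n).symm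
    refine squeeze_zero (fun n => ENNReal.toReal_nonneg) (fun n => ?_) hkey
    exact ENNReal.toReal_mono (measure_ne_top P _) (measure_mono (hsub n))
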